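/- With E_i^k the coefficient of λ^i in det(1 + λ G_k), where G_k is the k-th leading principal minor matrix of G_n, the quantum elementary symmetric functions satisfy the recurrence E_i^k = E_i^{k-1} + x_k E_{i-1}^{k-1} + q_{k-1} E_{i-2}^{k-2}. -/
import Mathlib


open MvPolynomial Polynomial

/-- The ring `P_n = ℤ[q_1,…,q_{n-1}][x_1,…,x_n]`, with `x_i = X (.inl i)` and
`q_j = X (.inr j)`. -/
abbrev Pn (n : ℕ) := MvPolynomial (Fin n ⊕ Fin (n - 1)) ℤ

/-- The tridiagonal matrix `G_n` with diagonal `x_1,…,x_n`, superdiagonal `q_1,…,q_{n-1}`,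
and subdiagonal entries `-1`. -/
noncomputable def Gmat (n : ℕ) : Matrix (Fin n) (Fin n) (Pn n) :=
  Matrix.of fun i j =>
    if i = j then MvPolynomial.X (Sum.inl i)
    else if h : (i : ℕ) + 1 = (j : ℕ) then
      MvPolynomial.X (Sum.inr ⟨(i : ℕ), by have := j.isLt; omega⟩)
    else if (j : ℕ) + 1 = (i : ℕ) then -1
    else 0

/-- `Eq' n k hk i` is the quantum elementary symmetric function `E_i^k`: the coefficient of
`λ^i` in `det(1 + λ G_k)`, where `G_k` is the `k`-th leading principal submatrix of `G_n`. -/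
noncomputable def Eqs (n : ℕ) (k : ℕ) (hk : k ≤ n) (i : ℕ) : Pn n :=
  (Matrix.det
     (1 + (Polynomial.X : Polynomial (Pn n)) •
        ((Gmat n).submatrix (Fin.castLE hk) (Fin.castLE hk)).map Polynomial.C)).coeff i

/-- Integer-indexed version of `Eqs`, with the convention `E_i^k = 0` for `i < 0`. -/
noncomputable def EqsZ (n : ℕ) (k : ℕ) (hk : k ≤ n) (i : ℤ) : Pn n :=
  if 0 ≤ i then Eqs n k hk i.toNat else 0

section TridAux

variable {R : Type*} [CommRing R]

noncomputable def trid (a b c : ℕ → R) (m : ℕ) : Matrix (Fin m) (Fin m) R :=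
  Matrix.of fun i j =>
    if (i : ℕ) = (j : ℕ) then a i
    else if (i : ℕ) + 1 = (j : ℕ) then b i
    else if (j : ℕ) + 1 = (i : ℕ) then c j
    else 0

lemma trid_apply (a b c : ℕ → R) (m : ℕ) (i j : Fin m) :
    trid a b c m i j =
      if (i : ℕ) = (j : ℕ) then a i
      else if (i : ℕ) + 1 = (j : ℕ) then b i
      else if (j : ℕ) + 1 = (i : ℕ) then c j else 0 := rfl

lemma det_trid_rec (a b c : ℕ → R) (m : ℕ) :
    (trid a b c (m + 2)).det =
      a (m + 1) * (trid a b c (m + 1)).det - b m * c m * (trid a b c m).det := by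
  have hsub : (trid a b c (m+2)).submatrix (Fin.last (m+1)).succAbove (Fin.last (m+1)).succAbove
        = trid a b c (m+1) := by
    ext i j
    simp [Fin.succAbove_last, trid_apply, trid]
  set p : Fin (m+2) := Fin.castSucc (Fin.last m) with hp
  have hpval : (p : ℕ) = m := rfl
  have hcol : (p.succAbove (Fin.last m) : ℕ) = m + 1 := by
    simp [Fin.succAbove, p]
  have hminor : ((trid a b c (m+2)).submatrix (Fin.last (m+1)).succAbove p.succAbove).det
      = b m * (trid a b c m).det := by
    rw [Matrix.det_succ_column ((trid a b c (m+2)).submatrix (Fin.last (m+1)).succAbove p.succAbove) (Fin.last m)]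
    rw [Finset.sum_eq_single (Fin.last m)]
    · have hentry : (trid a b c (m+2)).submatrix (Fin.last (m+1)).succAbove p.succAbove
          (Fin.last m) (Fin.last m) = b m := by
        simp [Fin.succAbove_last, trid_apply, hcol]
      have hsub2 : ((trid a b c (m+2)).submatrix (Fin.last (m+1)).succAbove p.succAbove).submatrix
          (Fin.last m).succAbove (Fin.last m).succAbove = trid a b c m := by
        ext i j
        have hcval : (p.succAbove (Fin.castSucc j) : ℕ) = j := by
          simp [Fin.succAbove, p, Fin.lt_def, j.isLt]
        simp [Fin.succAbove_last, trid_apply, hcval, Matrix.submatrix_apply, trid]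
      rw [hentry, hsub2]
      have hs : ((-1 : R)) ^ ((Fin.last m : ℕ) + (Fin.last m : ℕ)) = 1 :=
        Even.neg_one_pow ⟨(Fin.last m : ℕ), rfl⟩
      rw [hs, one_mul]
    · intro i _ hi
      have hival : (i : ℕ) < m := by
        have h2 := i.isLt
        rcases Nat.lt_succ_iff_lt_or_eq.mp h2 with h | h
        · exact h
        · exact absurd (Fin.ext h) hi
      have hz : trid a b c (m+2) (Fin.succAbove (Fin.last (m+1)) i) (p.succAbove (Fin.last m)) = 0 := by
        rw [Fin.succAbove_last, trid_apply]
        have e1 : ¬ ((Fin.castSucc i : ℕ) = (p.succAbove (Fin.last m) : ℕ)) := by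
          rw [Fin.coe_castSucc, hcol]; omega
        have e2 : ¬ ((Fin.castSucc i : ℕ) + 1 = (p.succAbove (Fin.last m) : ℕ)) := by
          rw [Fin.coe_castSucc, hcol]; omega
        have e3 : ¬ ((p.succAbove (Fin.last m) : ℕ) + 1 = (Fin.castSucc i : ℕ)) := by
          rw [Fin.coe_castSucc, hcol]; omega
        rw [if_neg e1, if_neg e2, if_neg e3]
      rw [Matrix.submatrix_apply, hz]
      ring
    · simp
  rw [Matrix.det_succ_row (trid a b c (m+2)) (Fin.last (m+1))]
  rw [Fin.sum_univ_castSucc, Fin.sum_univ_castSucc]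
  have hzero : ∀ j : Fin m, (-1 : R)^((Fin.last (m+1) : ℕ) + ((Fin.castSucc (Fin.castSucc j)) : ℕ))
      * trid a b c (m+2) (Fin.last (m+1)) (Fin.castSucc (Fin.castSucc j))
      * ((trid a b c (m+2)).submatrix (Fin.last (m+1)).succAbove
          (Fin.castSucc (Fin.castSucc j)).succAbove).det = 0 := by
    intro j
    have hjm := j.isLt
    have : trid a b c (m+2) (Fin.last (m+1)) (Fin.castSucc (Fin.castSucc j)) = 0 := by
      rw [trid_apply]
      have e1 : ¬ ((Fin.last (m+1) : ℕ) = ((Fin.castSucc (Fin.castSucc j)) : ℕ)) := by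
        simp [Fin.val_last]; omega
      have e2 : ¬ ((Fin.last (m+1) : ℕ) + 1 = ((Fin.castSucc (Fin.castSucc j)) : ℕ)) := by
        simp [Fin.val_last]; omega
      have e3 : ¬ (((Fin.castSucc (Fin.castSucc j)) : ℕ) + 1 = (Fin.last (m+1) : ℕ)) := by
        simp [Fin.val_last]; omega
      rw [if_neg e1, if_neg e2, if_neg e3]
    rw [this]; ring
  rw [Finset.sum_eq_zero fun j _ => hzero j, zero_add]
  have hlastentry : trid a b c (m+2) (Fin.last (m+1)) (Fin.last (m+1)) = a (m+1) := by
    simp [trid_apply]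
  have hpentry : trid a b c (m+2) (Fin.last (m+1)) p = c m := by
    rw [trid_apply, Fin.val_last, hpval]
    split_ifs with h1 h2 h3
    · omega
    · omega
    · rfl
    · omega
  rw [show Fin.castSucc (Fin.last m) = p from rfl, hpentry, hlastentry, hminor, hsub]
  have hsign1 : (-1 : R) ^ ((Fin.last (m+1) : ℕ) + (Fin.last (m+1) : ℕ)) = 1 :=
    Even.neg_one_pow ⟨(Fin.last (m+1) : ℕ), rfl⟩
  have hsign2 : (-1 : R) ^ ((Fin.last (m+1) : ℕ) + (p : ℕ)) = -1 := by
    rw [Fin.val_last, hpval, show (m+1+m) = 2*m+1 by ring, pow_succ, pow_mul]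
    simp
  rw [hsign1, hsign2]
  ring

end TridAux

noncomputable def aF (n : ℕ) : ℕ → Polynomial (Pn n) := fun i =>
  if h : i < n then 1 + Polynomial.X * Polynomial.C (MvPolynomial.X (Sum.inl ⟨i, h⟩)) else 0

noncomputable def bF (n : ℕ) : ℕ → Polynomial (Pn n) := fun i =>
  if h : i < n - 1 then Polynomial.X * Polynomial.C (MvPolynomial.X (Sum.inr ⟨i, h⟩)) else 0

noncomputable def cF (n : ℕ) : ℕ → Polynomial (Pn n) := fun _ => -Polynomial.X

lemma matrix_eq_trid (n k : ℕ) (hk : k ≤ n) :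
    (1 + (Polynomial.X : Polynomial (Pn n)) •
        ((Gmat n).submatrix (Fin.castLE hk) (Fin.castLE hk)).map Polynomial.C)
      = trid (aF n) (bF n) (cF n) k := by
  refine Matrix.ext fun i j => ?_
  have hi : (i : ℕ) < n := lt_of_lt_of_le i.isLt hk
  have hj : (j : ℕ) < n := lt_of_lt_of_le j.isLt hk
  rw [Matrix.add_apply, Matrix.smul_apply, Matrix.map_apply, Matrix.submatrix_apply, trid_apply]
  by_cases h1 : (i : ℕ) = (j : ℕ)
  · have hij : i = j := Fin.ext h1
    subst hij
    rw [if_pos rfl, Matrix.one_apply_eq]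
    rw [show Gmat n (Fin.castLE hk i) (Fin.castLE hk i) = MvPolynomial.X (Sum.inl (Fin.castLE hk i))
      from if_pos rfl]
    rw [aF]
    rw [dif_pos hi]
    rfl
  · have hne : Fin.castLE hk i ≠ Fin.castLE hk j := by
      intro h
      apply h1
      have h' := congrArg Fin.val h
      exact h'
    have hne0 : i ≠ j := fun h => h1 (congrArg Fin.val h)
    rw [if_neg h1, Matrix.one_apply_ne hne0, zero_add]
    by_cases h2 : (i : ℕ) + 1 = (j : ℕ)
    · have h2' : ((Fin.castLE hk i : Fin n) : ℕ) + 1 = ((Fin.castLE hk j : Fin n) : ℕ) := h2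
      rw [if_pos h2]
      have hg : Gmat n (Fin.castLE hk i) (Fin.castLE hk j)
          = MvPolynomial.X (Sum.inr ⟨(i : ℕ), by omega⟩) := by
        rw [Gmat, Matrix.of_apply, if_neg hne, dif_pos h2']
        rfl
      rw [hg, bF, dif_pos (show (i : ℕ) < n - 1 by omega)]
      rw [smul_eq_mul]
    · have h2' : ¬ (((Fin.castLE hk i : Fin n) : ℕ) + 1 = ((Fin.castLE hk j : Fin n) : ℕ)) := h2
      rw [if_neg h2]
      by_cases h3 : (j : ℕ) + 1 = (i : ℕ)
      · have h3' : ((Fin.castLE hk j : Fin n) : ℕ) + 1 = ((Fin.castLE hk i : Fin n) : ℕ) := h3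
        rw [if_pos h3]
        have hg : Gmat n (Fin.castLE hk i) (Fin.castLE hk j) = -1 := by
          rw [Gmat, Matrix.of_apply, if_neg hne, dif_neg h2', if_pos h3']
        rw [hg, cF]
        simp only [map_neg, map_one, smul_eq_mul]
        ring
      · have h3' : ¬ (((Fin.castLE hk j : Fin n) : ℕ) + 1 = ((Fin.castLE hk i : Fin n) : ℕ)) := h3
        rw [if_neg h3]
        have hg : Gmat n (Fin.castLE hk i) (Fin.castLE hk j) = 0 := by
          rw [Gmat, Matrix.of_apply, if_neg hne, dif_neg h2', if_neg h3']
        rw [hg]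
        simp

lemma Eqs_eq_trid (n k : ℕ) (hk : k ≤ n) (i : ℕ) :
    Eqs n k hk i = ((trid (aF n) (bF n) (cF n) k).det).coeff i := by
  rw [Eqs, matrix_eq_trid n k hk]

theorem Eqs_recurrence (n k : ℕ) (hk2 : 2 ≤ k) (hkn : k ≤ n) (i : ℤ) :
    EqsZ n k hkn i =
      EqsZ n (k - 1) (by omega) i +
        MvPolynomial.X (Sum.inl (⟨k - 1, by omega⟩ : Fin n)) * EqsZ n (k - 1) (by omega) (i - 1) +
        MvPolynomial.X (Sum.inr (⟨k - 2, by omega⟩ : Fin (n - 1))) *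
          EqsZ n (k - 2) (by omega) (i - 2) := by
  obtain ⟨m, rfl⟩ : ∃ m, k = m + 2 := ⟨k - 2, by omega⟩
  have hm1 : m + 1 < n := by omega
  have hm2 : m < n - 1 := by omega
  simp only [show m + 2 - 1 = m + 1 from rfl, show m + 2 - 2 = m from rfl]
  have hrec : (trid (aF n) (bF n) (cF n) (m+2) : Matrix _ _ (Polynomial (Pn n))).det
      = (trid (aF n) (bF n) (cF n) (m+1)).det
        + Polynomial.C (MvPolynomial.X (Sum.inl (⟨m + 1, hm1⟩ : Fin n)))
            * (Polynomial.X * (trid (aF n) (bF n) (cF n) (m+1)).det)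
        + Polynomial.C (MvPolynomial.X (Sum.inr (⟨m, hm2⟩ : Fin (n - 1))))
            * (Polynomial.X * (Polynomial.X * (trid (aF n) (bF n) (cF n) m).det)) := by
    rw [det_trid_rec, aF, bF, cF, dif_pos hm1, dif_pos hm2]
    ring
  have key : ∀ j : ℕ, Eqs n (m+2) hkn j = ((trid (aF n) (bF n) (cF n) (m+2)).det).coeff j :=
    fun j => Eqs_eq_trid n (m+2) hkn j
  have key1 : ∀ (h : m + 1 ≤ n) (j : ℕ),
      Eqs n (m+1) h j = ((trid (aF n) (bF n) (cF n) (m+1)).det).coeff j :=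
    fun h j => Eqs_eq_trid n (m+1) h j
  have key0 : ∀ (h : m ≤ n) (j : ℕ),
      Eqs n m h j = ((trid (aF n) (bF n) (cF n) m).det).coeff j :=
    fun h j => Eqs_eq_trid n m h j
  rcases lt_or_ge i 0 with hi | hi
  · have h0 : ¬ (0:ℤ) ≤ i := by omega
    have h1 : ¬ (0:ℤ) ≤ i - 1 := by omega
    have h2 : ¬ (0:ℤ) ≤ i - 2 := by omega
    simp only [EqsZ, if_neg h0, if_neg h1, if_neg h2]
    ring
  · lift i to ℕ using hi with j
    match j with
    | 0 =>
      have p0 : (0:ℤ) ≤ ((0:ℕ):ℤ) := Int.natCast_nonneg _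
      have h1 : ¬ (0:ℤ) ≤ ((0:ℕ):ℤ) - 1 := by omega
      have h2 : ¬ (0:ℤ) ≤ ((0:ℕ):ℤ) - 2 := by omega
      simp only [EqsZ, if_pos p0, if_neg h1, if_neg h2, Int.toNat_natCast]
      rw [key, key1, hrec]
      simp only [Polynomial.coeff_add, Polynomial.coeff_C_mul]
      have c1 : (Polynomial.X * (trid (aF n) (bF n) (cF n) (m+1)).det).coeff 0 = 0 := by
        simp [Polynomial.mul_coeff_zero]
      have c2 : (Polynomial.X *
          (Polynomial.X * (trid (aF n) (bF n) (cF n) m).det)).coeff 0 = 0 := by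
        simp [Polynomial.mul_coeff_zero]
      rw [c1, c2]
    | 1 =>
      have p1 : (0:ℤ) ≤ ((1:ℕ):ℤ) := Int.natCast_nonneg _
      have e1 : ((1:ℕ):ℤ) - 1 = ((0:ℕ):ℤ) := by omega
      have h2 : ¬ (0:ℤ) ≤ ((1:ℕ):ℤ) - 2 := by omega
      have p0 : (0:ℤ) ≤ ((0:ℕ):ℤ) := Int.natCast_nonneg _
      simp only [EqsZ, e1, if_pos p1, if_pos p0, if_neg h2, Int.toNat_natCast]
      rw [key, key1, key1, hrec]
      simp only [Polynomial.coeff_add, Polynomial.coeff_C_mul]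
      have c1 : (Polynomial.X * (trid (aF n) (bF n) (cF n) (m+1)).det).coeff 1
          = ((trid (aF n) (bF n) (cF n) (m+1)).det).coeff 0 :=
        Polynomial.coeff_X_mul _ 0
      have c2 : (Polynomial.X *
          (Polynomial.X * (trid (aF n) (bF n) (cF n) m).det)).coeff 1
          = (Polynomial.X * (trid (aF n) (bF n) (cF n) m).det).coeff 0 :=
        Polynomial.coeff_X_mul _ 0
      have c3 : (Polynomial.X * (trid (aF n) (bF n) (cF n) m).det).coeff 0 = 0 := by
        simp [Polynomial.mul_coeff_zero]
      rw [c1, c2, c3]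
    | (j+2) =>
      have p2 : (0:ℤ) ≤ ((j+2:ℕ):ℤ) := Int.natCast_nonneg _
      have p1 : (0:ℤ) ≤ ((j+1:ℕ):ℤ) := Int.natCast_nonneg _
      have p0 : (0:ℤ) ≤ ((j:ℕ):ℤ) := Int.natCast_nonneg _
      have e1 : ((j+2:ℕ):ℤ) - 1 = ((j+1:ℕ):ℤ) := by push_cast; ring
      have e2 : ((j+2:ℕ):ℤ) - 2 = ((j:ℕ):ℤ) := by push_cast; ring
      simp only [EqsZ, e1, e2, if_pos p2, if_pos p1, if_pos p0, Int.toNat_natCast]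
      rw [key, key1, key1, key0, hrec]
      simp only [Polynomial.coeff_add, Polynomial.coeff_C_mul]
      have c1 : (Polynomial.X * (trid (aF n) (bF n) (cF n) (m+1)).det).coeff (j+2)
          = ((trid (aF n) (bF n) (cF n) (m+1)).det).coeff (j+1) :=
        Polynomial.coeff_X_mul _ (j+1)
      have c2 : (Polynomial.X *
          (Polynomial.X * (trid (aF n) (bF n) (cF n) m).det)).coeff (j+2)
          = (Polynomial.X * (trid (aF n) (bF n) (cF n) m).det).coeff (j+1) :=
        Polynomial.coeff_X_mul _ (j+1)
      have c3 : (Polynomial.X * (trid (aF n) (bF n) (cF n) m).det).coeff (j+1)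
          = ((trid (aF n) (bF n) (cF n) m).det).coeff j :=
        Polynomial.coeff_X_mul _ j
      rw [c1, c2, c3]
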